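/- arXiv:2004.13090 — 3 statements merged into one kernel-verified Lean document; each statement's English description precedes it below -/
import Mathlib

section
/- Let l > 0, β̃ > 0, let c, D : [0,l] → ℝ be continuously differentiable with D(x) > 0, let μ : [0,l] → ℝ be continuous, set β(x) = β̃·μ(x), and φ(x) = exp(∫₀ˣ c(y)/D(y) dy). Then φ satisfies 2β(x)φ(x) = λ·( [c(x)φ(x) − D(x)φ'(x)]' + (β(x)+μ(x))φ(x) ) for all x ∈ [0,l] with λ = 2β̃/(β̃+1). -/
theorem stmt_6 (l βt : ℝ) (hl : 0 < l) (hβt : 0 < βt) (c D μ : ℝ → ℝ)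
    (hc : ContDiffOn ℝ 1 c (Set.Icc 0 l)) (hD : ContDiffOn ℝ 1 D (Set.Icc 0 l))
    (hDpos : ∀ x ∈ Set.Icc 0 l, 0 < D x) (hμ : ContinuousOn μ (Set.Icc 0 l))
    (β : ℝ → ℝ) (hβ : ∀ x, β x = βt * μ x)
    (φ : ℝ → ℝ) (hφ : ∀ x, φ x = Real.exp (∫ y in (0:ℝ)..x, c y / D y)) :
    ∀ x ∈ Set.Icc 0 l,
      2 * β x * φ x =
        (2 * βt / (βt + 1)) *
          (derivWithin (fun z => c z * φ z - D z * derivWithin φ (Set.Icc 0 l) z)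
              (Set.Icc 0 l) x + (β x + μ x) * φ x) := by
  intro x hx
  have hφeq : φ = fun x => Real.exp (∫ y in (0:ℝ)..x, c y / D y) := funext hφ
  have hcd : ContinuousOn (fun y => c y / D y) (Set.Icc 0 l) :=
    hc.continuousOn.div hD.continuousOn (fun y hy => (hDpos y hy).ne')
  -- derivative of φ within Icc at any point of Icc
  have hder : ∀ z ∈ Set.Icc 0 l,
      HasDerivWithinAt φ (c z / D z * φ z) (Set.Icc 0 l) z := by
    intro z hz
    haveI : Fact (z ∈ Set.Icc 0 l) := ⟨hz⟩
    have hint : IntervalIntegrable (fun y => c y / D y) MeasureTheory.volume 0 z := by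
      apply (hcd.mono _).intervalIntegrable
      rw [Set.uIcc_of_le hz.1]
      exact Set.Icc_subset_Icc le_rfl hz.2
    have hmeas : StronglyMeasurableAtFilter (fun y => c y / D y)
        (nhdsWithin z (Set.Icc 0 l)) MeasureTheory.volume :=
      hcd.stronglyMeasurableAtFilter_nhdsWithin measurableSet_Icc z
    have hg : HasDerivWithinAt (fun u => ∫ y in (0:ℝ)..u, c y / D y) (c z / D z)
        (Set.Icc 0 l) z :=
      intervalIntegral.integral_hasDerivWithinAt_right hint hmeas (hcd z hz)
    rw [hφeq]
    simpa [hφ z, mul_comm] using hg.exp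
  have hU : UniqueDiffWithinAt ℝ (Set.Icc 0 l) x :=
    (uniqueDiffOn_Icc hl) x hx
  have hφd : derivWithin φ (Set.Icc 0 l) x = c x / D x * φ x :=
    (hder x hx).derivWithin hU
  -- the flux vanishes on Icc
  have hzero : Set.EqOn (fun z => c z * φ z - D z * derivWithin φ (Set.Icc 0 l) z)
      (fun _ => (0:ℝ)) (Set.Icc 0 l) := by
    intro z hz
    have : derivWithin φ (Set.Icc 0 l) z = c z / D z * φ z :=
      (hder z hz).derivWithin ((uniqueDiffOn_Icc hl) z hz)
    simp only [this]
    have hDz := (hDpos z hz).ne'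
    field_simp
    ring
  have hdz : derivWithin (fun z => c z * φ z - D z * derivWithin φ (Set.Icc 0 l) z)
      (Set.Icc 0 l) x = 0 := by
    rw [derivWithin_congr hzero (hzero hx)]
    exact (hasDerivWithinAt_const x (Set.Icc 0 l) (0:ℝ)).derivWithin hU
  rw [hdz, hβ x]
  have h1 : βt + 1 ≠ 0 := by linarith
  field_simp
  ring
end

section
/- Let l > 0, let γ, δ : [0,l] → ℝ be continuous and nonnegative, let β : [0,l] → ℝ be continuous and nonnegative, and θ ∈ [0,1]. Define Π₁(x) = exp(−∫₀ˣ(γ(y)+δ(y))dy) and assume θ·∫₀ˡ β(x)Π₁(x)dx ≠ 1. Given continuous ψ : [0,l] → ℝ, set C = θ∫₀ˡ β(x)(∫₀ˣ (Π₁(x)/Π₁(z))ψ(z)dz)dx · (1 − θ∫₀ˡ β(x)Π₁(x)dx)⁻¹ and φ(x) = Π₁(x)(C + ∫₀ˣ ψ(z)/Π₁(z) dz). Then φ is differentiable, satisfies (Mφ)(x) := φ'(x) + (γ(x)+δ(x))φ(x) = ψ(x) for all x ∈ [0,l], and satisfies the boundary condition φ(0) = θ∫₀ˡ β(x)φ(x)dx.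 -/
theorem stmt_11 (l θ : ℝ) (hl : 0 < l) (hθ : θ ∈ Set.Icc (0:ℝ) 1)
    (γ δ β : ℝ → ℝ)
    (hγ : ContinuousOn γ (Set.Icc 0 l)) (hδ : ContinuousOn δ (Set.Icc 0 l))
    (hβ : ContinuousOn β (Set.Icc 0 l))
    (hγ0 : ∀ x ∈ Set.Icc 0 l, 0 ≤ γ x) (hδ0 : ∀ x ∈ Set.Icc 0 l, 0 ≤ δ x)
    (hβ0 : ∀ x ∈ Set.Icc 0 l, 0 ≤ β x)
    (P1 : ℝ → ℝ) (hP1 : ∀ x, P1 x = Real.exp (-∫ y in (0:ℝ)..x, γ y + δ y))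
    (hne : θ * ∫ x in (0:ℝ)..l, β x * P1 x ≠ 1)
    (ψ : ℝ → ℝ) (hψ : ContinuousOn ψ (Set.Icc 0 l))
    (C : ℝ)
    (hC : C = θ * (∫ x in (0:ℝ)..l, β x * ∫ z in (0:ℝ)..x, (P1 x / P1 z) * ψ z) *
      (1 - θ * ∫ x in (0:ℝ)..l, β x * P1 x)⁻¹)
    (φ : ℝ → ℝ) (hφ : ∀ x, φ x = P1 x * (C + ∫ z in (0:ℝ)..x, ψ z / P1 z)) :
    (∀ x ∈ Set.Icc 0 l, DifferentiableWithinAt ℝ φ (Set.Icc 0 l) x) ∧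
    (∀ x ∈ Set.Icc 0 l, derivWithin φ (Set.Icc 0 l) x + (γ x + δ x) * φ x = ψ x) ∧
    φ 0 = θ * ∫ x in (0:ℝ)..l, β x * φ x := by
  have huc : UniqueDiffOn ℝ (Set.Icc (0:ℝ) l) := uniqueDiffOn_Icc hl
  -- fundamental theorem of calculus building block
  have FTC : ∀ (F : ℝ → ℝ), ContinuousOn F (Set.Icc 0 l) → ∀ x ∈ Set.Icc (0:ℝ) l,
      HasDerivWithinAt (fun u => ∫ y in (0:ℝ)..u, F y) (F x) (Set.Icc 0 l) x := by
    intro F hF x hx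
    haveI : Fact (x ∈ Set.Icc (0:ℝ) l) := ⟨hx⟩
    have hint : IntervalIntegrable F MeasureTheory.volume 0 x := by
      apply (hF.mono ?_).intervalIntegrable
      rw [Set.uIcc_of_le hx.1]
      exact Set.Icc_subset_Icc le_rfl hx.2
    exact intervalIntegral.integral_hasDerivWithinAt_right hint
      ⟨Set.Icc 0 l, self_mem_nhdsWithin, hF.aestronglyMeasurable measurableSet_Icc⟩
      (hF x hx)
  have hgd := FTC _ (hγ.add hδ)
  have hP1pos : ∀ x, 0 < P1 x := fun x => by rw [hP1]; exact Real.exp_pos _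
  have hP1d : ∀ x ∈ Set.Icc (0:ℝ) l,
      HasDerivWithinAt P1 (-(γ x + δ x) * P1 x) (Set.Icc 0 l) x := by
    intro x hx
    have heq : P1 = fun u => Real.exp (-∫ y in (0:ℝ)..u, γ y + δ y) := funext hP1
    rw [heq]
    have := ((hgd x hx).neg).exp
    convert this using 1
    · rfl
    beta_reduce
    simp only [Pi.neg_apply, Pi.add_apply]
    ring
  have hcP1 : ContinuousOn P1 (Set.Icc 0 l) :=
    fun x hx => (hP1d x hx).continuousWithinAt
  have hcψP : ContinuousOn (fun z => ψ z / P1 z) (Set.Icc 0 l) :=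
    hψ.div hcP1 (fun z _ => (hP1pos z).ne')
  have hhd := FTC _ hcψP
  have hch : ContinuousOn (fun x => ∫ z in (0:ℝ)..x, ψ z / P1 z) (Set.Icc 0 l) :=
    fun x hx => (hhd x hx).continuousWithinAt
  have hφd : ∀ x ∈ Set.Icc (0:ℝ) l,
      HasDerivWithinAt φ (-(γ x + δ x) * φ x + ψ x) (Set.Icc 0 l) x := by
    intro x hx
    have heq : φ = fun u => P1 u * (C + ∫ z in (0:ℝ)..u, ψ z / P1 z) := funext hφ
    rw [heq]
    have := (hP1d x hx).mul ((hasDerivWithinAt_const x _ C).add (hhd x hx))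
    refine this.congr_deriv ?_
    beta_reduce
    simp only [Pi.add_apply]
    have h1 : P1 x * (ψ x / P1 x) = ψ x := by field_simp [(hP1pos x).ne']
    linear_combination h1
  refine ⟨fun x hx => (hφd x hx).differentiableWithinAt, ?_, ?_⟩
  · intro x hx
    rw [(hφd x hx).derivWithin (huc x hx)]
    ring
  · -- boundary condition
    have hφ0 : φ 0 = C := by
      rw [hφ 0, hP1 0, intervalIntegral.integral_same, intervalIntegral.integral_same]
      simp
    have hinner : ∀ x, (∫ z in (0:ℝ)..x, (P1 x / P1 z) * ψ z)
        = P1 x * ∫ z in (0:ℝ)..x, ψ z / P1 z := by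
      intro x
      rw [← intervalIntegral.integral_const_mul]
      apply intervalIntegral.integral_congr
      intro z _
      ring
    have hI1 : IntervalIntegrable (fun x => β x * P1 x * C) MeasureTheory.volume 0 l := by
      apply ContinuousOn.intervalIntegrable
      rw [Set.uIcc_of_le hl.le]
      exact (hβ.mul hcP1).mul continuousOn_const
    have hI2 : IntervalIntegrable
        (fun x => β x * (P1 x * ∫ z in (0:ℝ)..x, ψ z / P1 z)) MeasureTheory.volume 0 l := by
      apply ContinuousOn.intervalIntegrable
      rw [Set.uIcc_of_le hl.le]
      exact hβ.mul (hcP1.mul hch)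
    have hsplit : (∫ x in (0:ℝ)..l, β x * φ x)
        = (∫ x in (0:ℝ)..l, β x * P1 x * C)
          + ∫ x in (0:ℝ)..l, β x * (P1 x * ∫ z in (0:ℝ)..x, ψ z / P1 z) := by
      rw [← intervalIntegral.integral_add hI1 hI2]
      apply intervalIntegral.integral_congr
      intro x _
      beta_reduce
      rw [hφ x]
      ring
    have hsecond : (∫ x in (0:ℝ)..l, β x * (P1 x * ∫ z in (0:ℝ)..x, ψ z / P1 z))
        = ∫ x in (0:ℝ)..l, β x * ∫ z in (0:ℝ)..x, (P1 x / P1 z) * ψ z := by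
      apply intervalIntegral.integral_congr
      intro x _
      beta_reduce
      rw [hinner x]
    have hfirst : (∫ x in (0:ℝ)..l, β x * P1 x * C)
        = (∫ x in (0:ℝ)..l, β x * P1 x) * C :=
      intervalIntegral.integral_mul_const _ _
    have h1A : (1 : ℝ) - θ * ∫ x in (0:ℝ)..l, β x * P1 x ≠ 0 :=
      sub_ne_zero.mpr (Ne.symm hne)
    have hCkey : C * (1 - θ * ∫ x in (0:ℝ)..l, β x * P1 x)
        = θ * ∫ x in (0:ℝ)..l, β x * ∫ z in (0:ℝ)..x, (P1 x / P1 z) * ψ z := by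
      rw [hC, mul_assoc, inv_mul_cancel₀ h1A, mul_one]
    rw [hφ0, hsplit, hsecond, hfirst]
    linear_combination hCkey
end

section
/- Let l > 0, α > 0. Then ∫₀ˡ exp(−αx/(l−x)) dx = l·(1 − α e^α ∫_α^∞ (e^{−x}/x) dx). -/
open MeasureTheory Set Real Filter

lemma aux_int1 {α : ℝ} (hα : 0 < α) :
    IntegrableOn (fun u : ℝ => Real.exp (-u) / u) (Ioi α) := by
  have hg : IntegrableOn (fun u : ℝ => α⁻¹ * Real.exp (-(1:ℝ) * u)) (Ioi α) :=
    (exp_neg_integrableOn_Ioi α one_pos).const_mul _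
  refine Integrable.mono hg ?_ ?_
  · apply (ContinuousOn.div (by fun_prop) continuousOn_id ?_).aestronglyMeasurable
      measurableSet_Ioi
    intro x hx; exact ne_of_gt (hα.trans hx)
  · filter_upwards [ae_restrict_mem measurableSet_Ioi] with u hu
    have hu0 : 0 < u := hα.trans hu
    rw [Real.norm_eq_abs, Real.norm_eq_abs, abs_of_pos (by positivity),
      abs_of_pos (by positivity), neg_one_mul]
    calc Real.exp (-u) / u ≤ Real.exp (-u) / α := by gcongr; exact hu.le
      _ = α⁻¹ * Real.exp (-u) := by rw [div_eq_inv_mul]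

lemma aux_int2 {α : ℝ} (hα : 0 < α) :
    IntegrableOn (fun u : ℝ => Real.exp (-u) / u ^ 2) (Ioi α) := by
  have hg : IntegrableOn (fun u : ℝ => (α ^ 2)⁻¹ * Real.exp (-(1:ℝ) * u)) (Ioi α) :=
    (exp_neg_integrableOn_Ioi α one_pos).const_mul _
  refine Integrable.mono hg ?_ ?_
  · apply (ContinuousOn.div (by fun_prop) (by fun_prop) ?_).aestronglyMeasurable
      measurableSet_Ioi
    intro x hx; have : 0 < x := hα.trans hx; positivity
  · filter_upwards [ae_restrict_mem measurableSet_Ioi] with u hu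
    have hu0 : 0 < u := hα.trans hu
    rw [Real.norm_eq_abs, Real.norm_eq_abs, abs_of_pos (by positivity),
      abs_of_pos (by positivity), neg_one_mul]
    calc Real.exp (-u) / u ^ 2 ≤ Real.exp (-u) / α ^ 2 := by
          gcongr
          exact hu.le
      _ = (α ^ 2)⁻¹ * Real.exp (-u) := by rw [div_eq_inv_mul]

lemma aux_parts {α : ℝ} (hα : 0 < α) :
    ∫ u in Ioi α, Real.exp (-u) / u ^ 2 =
      Real.exp (-α) / α - ∫ u in Ioi α, Real.exp (-u) / u := by
  have key : ∫ u in Ioi α, (Real.exp (-u) / u + Real.exp (-u) / u ^ 2) =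
      0 - (-(Real.exp (-α) / α)) := by
    apply integral_Ioi_of_hasDerivAt_of_tendsto
      (f := fun u => -(Real.exp (-u) / u))
    · apply ContinuousAt.continuousWithinAt
      have : ContinuousAt (fun u : ℝ => Real.exp (-u) / u) α :=
        ContinuousAt.div (by fun_prop) continuousAt_id (ne_of_gt hα)
      exact this.neg
    · intro x hx
      have hx0 : x ≠ 0 := ne_of_gt (hα.trans hx)
      have h1 : HasDerivAt (fun u : ℝ => Real.exp (-u)) (-Real.exp (-x)) x := by
        simpa [Function.comp_def] using (Real.hasDerivAt_exp (-x)).comp x ((hasDerivAt_id x).neg)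
      have h2 : HasDerivAt (fun u : ℝ => Real.exp (-u) / u)
          ((-Real.exp (-x) * x - Real.exp (-x) * 1) / x ^ 2) x :=
        h1.div (hasDerivAt_id x) hx0
      have := h2.neg
      convert this using 1
      · rfl
      field_simp
      ring
    · exact ((aux_int1 hα).add (aux_int2 hα))
    · have h1 : Tendsto (fun u : ℝ => Real.exp (-u) * u⁻¹) atTop (nhds (0 * 0)) :=
        (Real.tendsto_exp_neg_atTop_nhds_zero).mul tendsto_inv_atTop_zero
      rw [mul_zero] at h1
      have h2 := h1.neg
      rw [neg_zero] at h2
      refine h2.congr (fun u => ?_)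
      rw [div_eq_mul_inv]
  rw [integral_add (aux_int1 hα) (aux_int2 hα)] at key
  linarith [key]

theorem stmt_13 (l α : ℝ) (hl : 0 < l) (hα : 0 < α) :
    ∫ x in (0:ℝ)..l, Real.exp (-α * x / (l - x)) =
      l * (1 - α * Real.exp α * ∫ x in Set.Ioi α, Real.exp (-x) / x) := by
  set φ : ℝ → ℝ := fun u => l - l * α / u with hφ
  have himg : φ '' Ioi α = Ioo 0 l := by
    ext y
    constructor
    · rintro ⟨u, hu, rfl⟩
      have hu0 : 0 < u := hα.trans hu
      constructor
      · have : l * α / u < l := by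
          rw [div_lt_iff₀ hu0]
          exact (mul_lt_mul_iff_right₀ hl).mpr hu
        simp only [φ]; linarith
      · simp only [φ]
        have : 0 < l * α / u := by positivity
        linarith
    · rintro ⟨hy0, hyl⟩
      refine ⟨l * α / (l - y), ?_, ?_⟩
      · have h1 : 0 < l - y := by linarith
        rw [mem_Ioi, lt_div_iff₀ h1]
        nlinarith
      · simp only [φ]
        have h1 : (0:ℝ) < l - y := by linarith
        field_simp
        ring
  have hinj : InjOn φ (Ioi α) := by
    intro u hu v hv h
    have hu0 : u ≠ 0 := ne_of_gt (hα.trans hu)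
    have hv0 : v ≠ 0 := ne_of_gt (hα.trans hv)
    simp only [φ] at h
    have h2 : l * α / u = l * α / v := by linarith
    field_simp at h2
    exact h2.symm
  have hderiv : ∀ x ∈ Ioi α, HasDerivWithinAt φ (l * α / x ^ 2) (Ioi α) x := by
    intro x hx
    have hx0 : x ≠ 0 := ne_of_gt (hα.trans hx)
    have h1 : HasDerivAt (fun u : ℝ => l - l * α * u⁻¹)
        (0 - l * α * (-(x ^ 2)⁻¹)) x :=
      (hasDerivAt_const x l).sub (((hasDerivAt_inv hx0)).const_mul (l * α))
    have heq : (fun u : ℝ => l - l * α * u⁻¹) = φ := by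
      funext u; simp only [φ]; rw [mul_div_assoc, div_eq_mul_inv, mul_assoc]
    rw [heq] at h1
    have h2 : HasDerivAt φ (l * α / x ^ 2) x := by
      convert h1 using 1
      field_simp
      ring
    exact h2.hasDerivWithinAt
  have key := integral_image_eq_integral_abs_deriv_smul measurableSet_Ioi hderiv hinj
    (fun x => Real.exp (-α * x / (l - x)))
  rw [himg] at key
  have lhs_eq : ∫ x in (0:ℝ)..l, Real.exp (-α * x / (l - x)) =
      ∫ x in Ioo (0:ℝ) l, Real.exp (-α * x / (l - x)) := by
    rw [intervalIntegral.integral_of_le hl.le, ← integral_Ioc_eq_integral_Ioo]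
  rw [lhs_eq, key]
  have congr_eq : ∫ u in Ioi α, |l * α / u ^ 2| • Real.exp (-α * φ u / (l - φ u)) =
      ∫ u in Ioi α, (l * α * Real.exp α) * (Real.exp (-u) / u ^ 2) := by
    apply setIntegral_congr_fun measurableSet_Ioi
    intro u hu
    dsimp only
    have hu0 : 0 < u := hα.trans hu
    have hlphi : l - φ u = l * α / u := by simp only [φ]; ring
    have harg : -α * φ u / (l - φ u) = α - u := by
      rw [hlphi]
      simp only [φ]
      field_simp
      ring
    rw [harg, smul_eq_mul, abs_of_pos (by positivity), sub_eq_add_neg,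
      Real.exp_add]
    ring
  rw [congr_eq, integral_const_mul, aux_parts hα]
  have h1 : Real.exp α * Real.exp (-α) = 1 := by
    rw [← Real.exp_add, add_neg_cancel, Real.exp_zero]
  have h3 : l * α * Real.exp α * (Real.exp (-α) / α) = l := by
    field_simp
    linear_combination h1
  rw [mul_sub, h3]; ring
end
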